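/- The Bregman superquantile is monotone: if X ≤ X' almost surely (both with continuous distributions supported in dom_γ), then Q_α^{dγ}(X) ≤ Q_α^{dγ}(X'). -/

import Mathlib

open MeasureTheory

/-- Lower quantile of a real random variable. -/
noncomputable def lowerQuantile {Ω : Type*} [MeasurableSpace Ω] (μ : Measure Ω)
    (X : Ω → ℝ) (α : ℝ) : ℝ :=
  sInf {x : ℝ | α ≤ (μ {ω | X ω ≤ x}).toReal}

/-- Bregman superquantile `(γ')⁻¹(E[γ'(X) | X ≥ F_X^{-1}(α)])`. -/
noncomputable def bregmanSuperquantile {Ω : Type*} [MeasurableSpace Ω] (μ : Measure Ω)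
    (φ : ℝ → ℝ) (X : Ω → ℝ) (α : ℝ) : ℝ :=
  Function.invFun φ
    ((∫ ω in {ω | lowerQuantile μ X α ≤ X ω}, φ (X ω) ∂μ) /
      (μ {ω | lowerQuantile μ X α ≤ X ω}).toReal)

lemma quantile_cdf_eq {Ω : Type*} [MeasurableSpace Ω] (μ : Measure Ω) [IsProbabilityMeasure μ]
    (X : Ω → ℝ) (hXm : Measurable X)
    (hcX : Continuous fun x : ℝ => (μ {ω | X ω ≤ x}).toReal)
    (α : ℝ) (hα : α ∈ Set.Ioo (0:ℝ) 1) :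
    μ {ω | X ω ≤ lowerQuantile μ X α} = ENNReal.ofReal α ∧
    μ {ω | X ω = lowerQuantile μ X α} = 0 ∧
    μ {ω | lowerQuantile μ X α ≤ X ω} = 1 - ENNReal.ofReal α := by
  set F : ℝ → ℝ := fun x => (μ {ω | X ω ≤ x}).toReal with hF
  have hFfin : ∀ x, μ {ω | X ω ≤ x} ≠ ⊤ := fun x => measure_ne_top μ _
  have hFmono : Monotone F := by
    intro a b hab
    exact ENNReal.toReal_mono (hFfin b) (measure_mono fun ω h => le_trans h hab)
  set A : Set ℝ := {x : ℝ | α ≤ F x} with hA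
  have hne : A.Nonempty := by
    have hmono : Monotone fun n : ℕ => {ω | X ω ≤ (n:ℝ)} := by
      intro a b hab ω h
      simp only [Set.mem_setOf_eq] at h ⊢
      exact le_trans h (by exact_mod_cast hab)
    have hU : (⋃ n : ℕ, {ω | X ω ≤ (n:ℝ)}) = Set.univ := by
      ext ω; simp only [Set.mem_iUnion, Set.mem_univ, iff_true]
      obtain ⟨n, hn⟩ := exists_nat_ge (X ω)
      exact ⟨n, hn⟩
    have h1 := MeasureTheory.tendsto_measure_iUnion_atTop (μ := μ) hmono
    rw [hU, measure_univ] at h1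
    have h2 : Filter.Tendsto (fun n : ℕ => F n) Filter.atTop (nhds 1) := by
      have := (ENNReal.tendsto_toReal (by simp)).comp h1
      exact this
    obtain ⟨n, hn⟩ := (h2.eventually_const_le hα.2).exists
    exact ⟨n, hn⟩
  have hbb : BddBelow A := by
    have hanti : Antitone fun n : ℕ => {ω | X ω ≤ -(n:ℝ)} := by
      intro a b hab ω h
      simp only [Set.mem_setOf_eq] at h ⊢
      exact le_trans h (neg_le_neg (by exact_mod_cast hab))
    have hI : (⋂ n : ℕ, {ω | X ω ≤ -(n:ℝ)}) = ∅ := by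
      ext ω; simp only [Set.mem_iInter, Set.mem_empty_iff_false, iff_false, not_forall, not_le]
      obtain ⟨n, hn⟩ := exists_nat_gt (-(X ω))
      refine ⟨n, ?_⟩
      simp only [Set.mem_setOf_eq, not_le]
      linarith
    have h1 := MeasureTheory.tendsto_measure_iInter_atTop (μ := μ)
      (fun n => (hXm measurableSet_Iic).nullMeasurableSet) hanti ⟨0, measure_ne_top μ _⟩
    have hI' : (⋂ n : ℕ, X ⁻¹' Set.Iic (-(n:ℝ))) = ∅ := hI
    rw [hI', measure_empty] at h1
    have h2 : Filter.Tendsto (fun n : ℕ => F (-(n:ℝ))) Filter.atTop (nhds 0) := by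
      have := (ENNReal.tendsto_toReal (by simp)).comp h1
      exact this
    obtain ⟨n, hn⟩ := (h2.eventually_lt_const hα.1).exists
    refine ⟨-(n:ℝ), fun x hx => ?_⟩
    by_contra hx2
    push_neg at hx2
    exact absurd (le_trans hx (hFmono hx2.le)) (not_le.mpr hn)
  have hAclosed : IsClosed A := isClosed_le continuous_const hcX
  set q := sInf A with hq
  have hmem : q ∈ A := hAclosed.csInf_mem hne hbb
  have hFq_ge : α ≤ F q := hmem
  have hseqtend : Filter.Tendsto (fun n : ℕ => F (q - 1/(n+1))) Filter.atTop (nhds (F q)) := by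
    refine (hcX.tendsto q).comp ?_
    have h0 : Filter.Tendsto (fun n : ℕ => (1:ℝ)/(n+1)) Filter.atTop (nhds 0) :=
      tendsto_one_div_add_atTop_nhds_zero_nat
    simpa using (tendsto_const_nhds (x := q)).sub h0
  have hFq_le : F q ≤ α := by
    have hseq : ∀ n : ℕ, F (q - 1/(n+1)) ≤ α := by
      intro n
      by_contra h
      push_neg at h
      have : q ≤ q - 1/(n+1) := csInf_le hbb h.le
      have hpos : (0:ℝ) < 1/(n+1) := by positivity
      linarith
    exact le_of_tendsto hseqtend (Filter.Eventually.of_forall hseq)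
  have hFq : F q = α := le_antisymm hFq_le hFq_ge
  have hcdf : μ {ω | X ω ≤ q} = ENNReal.ofReal α := by
    rw [← hFq]
    exact (ENNReal.ofReal_toReal (hFfin q)).symm
  have hatom : μ {ω | X ω = q} = 0 := by
    have hbound : ∀ n : ℕ, (μ {ω | X ω = q}).toReal ≤ F q - F (q - 1/(n+1)) := by
      intro n
      have hpos : (0:ℝ) < 1/(n+1) := by positivity
      have hss : {ω | X ω ≤ q - 1/(n+1)} ⊆ {ω | X ω ≤ q} := by
        intro ω h; simp only [Set.mem_setOf_eq] at h ⊢; linarith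
      have hsub : {ω | X ω = q} ⊆ {ω | X ω ≤ q} \ {ω | X ω ≤ q - 1/(n+1)} := by
        intro ω h
        simp only [Set.mem_setOf_eq] at h
        exact ⟨le_of_eq h, by simp only [Set.mem_setOf_eq]; linarith⟩
      calc (μ {ω | X ω = q}).toReal
          ≤ (μ ({ω | X ω ≤ q} \ {ω | X ω ≤ q - 1/(n+1)})).toReal :=
            ENNReal.toReal_mono (measure_ne_top μ _) (measure_mono hsub)
        _ = F q - F (q - 1/(n+1)) := by
            rw [measure_diff hss ((hXm measurableSet_Iic).nullMeasurableSet) (measure_ne_top μ _)]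
            exact ENNReal.toReal_sub_of_le (measure_mono hss) (measure_ne_top μ _)
    have htend : Filter.Tendsto (fun n : ℕ => F q - F (q - 1/(n+1))) Filter.atTop (nhds 0) := by
      simpa using (tendsto_const_nhds (x := F q)).sub hseqtend
    have hle0 : (μ {ω | X ω = q}).toReal ≤ 0 :=
      ge_of_tendsto htend (Filter.Eventually.of_forall hbound)
    have h0 : (μ {ω | X ω = q}).toReal = 0 := le_antisymm hle0 ENNReal.toReal_nonneg
    exact ((ENNReal.toReal_eq_zero_iff _).mp h0).resolve_right (measure_ne_top μ _)
  have hlt : μ {ω | X ω < q} = ENNReal.ofReal α := by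
    refine le_antisymm ?_ ?_
    · rw [← hcdf]; exact measure_mono fun ω (h : X ω < q) => (le_of_lt h : X ω ≤ q)
    · have hsplit : {ω | X ω ≤ q} ⊆ {ω | X ω < q} ∪ {ω | X ω = q} := by
        intro ω h
        have h2 : X ω ≤ q := h
        rcases lt_or_eq_of_le h2 with h' | h'
        · exact Or.inl h'
        · exact Or.inr h'
      calc ENNReal.ofReal α = μ {ω | X ω ≤ q} := hcdf.symm
        _ ≤ μ ({ω | X ω < q} ∪ {ω | X ω = q}) := measure_mono hsplit
        _ ≤ μ {ω | X ω < q} + μ {ω | X ω = q} := measure_union_le _ _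
        _ = μ {ω | X ω < q} := by rw [hatom, add_zero]
  have htail : μ {ω | q ≤ X ω} = 1 - ENNReal.ofReal α := by
    have hc : {ω | q ≤ X ω} = {ω | X ω < q}ᶜ := by
      ext ω; simp [not_lt]
    rw [hc, measure_compl (show MeasurableSet {ω | X ω < q} from hXm measurableSet_Iio) (measure_ne_top μ _), measure_univ, hlt]
  exact ⟨hcdf, hatom, htail⟩

lemma mean_mem_range {Ω : Type*} [MeasurableSpace Ω] (μ : Measure Ω) [IsFiniteMeasure μ]
    (φ : ℝ → ℝ) (hφc : Continuous φ) (f : Ω → ℝ) (s : Set Ω) (hs : MeasurableSet s)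
    (hsne : μ s ≠ 0) (hint : IntegrableOn (fun ω => φ (f ω)) s μ) :
    (∫ ω in s, φ (f ω) ∂μ) / (μ s).toReal ∈ Set.range φ := by
  set k := (μ s).toReal with hk
  have hkpos : 0 < k := ENNReal.toReal_pos hsne (measure_ne_top μ s)
  set m := (∫ ω in s, φ (f ω) ∂μ) / k with hm
  have hIm : ∫ ω in s, φ (f ω) ∂μ = m * k := by
    rw [hm, div_mul_cancel₀ _ hkpos.ne']
  have key : ∀ (g : Ω → ℝ), IntegrableOn g s μ → (∫ ω in s, g ω ∂μ) = 0 →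
      ¬ (∀ ω ∈ s, 0 < g ω) := by
    intro g hg hg0 hpos
    have hae : 0 ≤ᵐ[μ.restrict s] g := by
      filter_upwards [ae_restrict_mem hs] with ω hω using (hpos ω hω).le
    have := (setIntegral_pos_iff_support_of_nonneg_ae hae hg).mpr ?_
    · rw [hg0] at this; exact lt_irrefl 0 this
    · have hsup : s ⊆ Function.support g ∩ s := fun ω hω =>
        ⟨ne_of_gt (hpos ω hω), hω⟩
      exact lt_of_lt_of_le (pos_iff_ne_zero.mpr hsne) (measure_mono hsup)
  have hub : ∃ ω ∈ s, φ (f ω) ≤ m := by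
    by_contra h
    push_neg at h
    refine key (fun ω => φ (f ω) - m) (hint.sub ((integrableOn_const_iff).mpr
      (Or.inr (lt_of_le_of_ne le_top (measure_ne_top μ s))))) ?_ fun ω hω => ?_
    · rw [integral_sub hint ((integrableOn_const_iff).mpr
        (Or.inr (lt_of_le_of_ne le_top (measure_ne_top μ s)))), setIntegral_const, hIm]
      simp [mul_comm, measureReal_def, hk]
    · exact sub_pos.mpr (h ω hω)
  have hlb : ∃ ω ∈ s, m ≤ φ (f ω) := by
    by_contra h
    push_neg at h
    refine key (fun ω => m - φ (f ω)) (((integrableOn_const_iff).mpr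
      (Or.inr (lt_of_le_of_ne le_top (measure_ne_top μ s)))).sub hint) ?_ fun ω hω => ?_
    · rw [integral_sub ((integrableOn_const_iff (C := m)).mpr
        (Or.inr (lt_of_le_of_ne le_top (measure_ne_top μ s)))) hint, setIntegral_const, hIm]
      simp [mul_comm, measureReal_def, hk]
    · exact sub_pos.mpr (h ω hω)
  obtain ⟨ω₁, _, h₁⟩ := hub
  obtain ⟨ω₂, _, h₂⟩ := hlb
  have hoc : (Set.range φ).OrdConnected := (isPreconnected_range hφc).ordConnected
  exact hoc.out ⟨f ω₁, rfl⟩ ⟨f ω₂, rfl⟩ ⟨h₁, h₂⟩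

lemma setIntegral_le_tail {Ω : Type*} [MeasurableSpace Ω] (μ : Measure Ω) [IsFiniteMeasure μ]
    (f : Ω → ℝ) (hfm : Measurable f) (hint : Integrable f μ) (q : ℝ)
    (s : Set Ω) (hs : MeasurableSet s)
    (hmeq : μ s = μ {ω | q ≤ f ω}) :
    ∫ ω in s, f ω ∂μ ≤ ∫ ω in {ω | q ≤ f ω}, f ω ∂μ := by
  set s' : Set Ω := {ω | q ≤ f ω} with hs'def
  have hs' : MeasurableSet s' := hfm measurableSet_Ici
  have hconstInt : ∀ (t : Set Ω), IntegrableOn (fun _ => q) t μ :=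
    fun t => (integrableOn_const_iff).mpr (Or.inr (lt_of_le_of_ne le_top (measure_ne_top μ t)))
  have hfint : ∀ (t : Set Ω), IntegrableOn f t μ := fun t => hint.integrableOn
  have hdiffeq : μ (s \ s') = μ (s' \ s) := by
    have h1 : μ (s ∩ s') + μ (s \ s') = μ s := measure_inter_add_diff s hs'
    have h2 : μ (s' ∩ s) + μ (s' \ s) = μ s' := measure_inter_add_diff s' hs
    rw [Set.inter_comm] at h2
    rw [hmeq, ← h2] at h1
    exact (ENNReal.add_right_inj (measure_ne_top μ _)).mp h1
  have hsplit1 : ∫ ω in s, f ω ∂μ = (∫ ω in s ∩ s', f ω ∂μ) + ∫ ω in s \ s', f ω ∂μ :=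
    (integral_inter_add_diff hs' (hfint s)).symm
  have hsplit2 : ∫ ω in s', f ω ∂μ = (∫ ω in s' ∩ s, f ω ∂μ) + ∫ ω in s' \ s, f ω ∂μ :=
    (integral_inter_add_diff hs (hfint s')).symm
  have hup : ∫ ω in s \ s', f ω ∂μ ≤ q * (μ (s \ s')).toReal := by
    calc ∫ ω in s \ s', f ω ∂μ ≤ ∫ ω in s \ s', q ∂μ := by
          refine setIntegral_mono_on (hfint _) (hconstInt _) (hs.diff hs') fun ω hω => ?_
          have : ¬ q ≤ f ω := hω.2
          linarith [not_le.mp this]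
      _ = q * (μ (s \ s')).toReal := by rw [setIntegral_const, smul_eq_mul, measureReal_def]; ring
  have hlo : q * (μ (s' \ s)).toReal ≤ ∫ ω in s' \ s, f ω ∂μ := by
    calc q * (μ (s' \ s)).toReal = ∫ ω in s' \ s, q ∂μ := by rw [setIntegral_const, smul_eq_mul, measureReal_def]; ring
      _ ≤ ∫ ω in s' \ s, f ω ∂μ := by
          refine setIntegral_mono_on (hconstInt _) (hfint _) (hs'.diff hs) fun ω hω => hω.1
  rw [hsplit1, hsplit2, Set.inter_comm s s']
  have : (μ (s \ s')).toReal = (μ (s' \ s)).toReal := by rw [hdiffeq]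
  linarith [hup, hlo, this ▸ hup]

/-- Monotonicity of the Bregman superquantile: if `X ≤ X'` a.s. (with continuous
distributions), then `Q_α^{dγ}(X) ≤ Q_α^{dγ}(X')`. -/
theorem bregmanSuperquantile_mono {Ω : Type*} [MeasurableSpace Ω]
    (μ : Measure Ω) [IsProbabilityMeasure μ]
    (φ : ℝ → ℝ) (hφ : StrictMono φ) (hφc : Continuous φ)
    (X X' : Ω → ℝ) (hXm : Measurable X) (hX'm : Measurable X')
    (hcX : Continuous fun x : ℝ => (μ {ω | X ω ≤ x}).toReal)
    (hcX' : Continuous fun x : ℝ => (μ {ω | X' ω ≤ x}).toReal)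
    (hintX : Integrable (fun ω => φ (X ω)) μ)
    (hintX' : Integrable (fun ω => φ (X' ω)) μ)
    (hle : ∀ᵐ ω ∂μ, X ω ≤ X' ω)
    (α : ℝ) (hα : α ∈ Set.Ioo (0:ℝ) 1) :
    bregmanSuperquantile μ φ X α ≤ bregmanSuperquantile μ φ X' α := by
  obtain ⟨-, -, htail⟩ := quantile_cdf_eq μ X hXm hcX α hα
  obtain ⟨-, -, htail'⟩ := quantile_cdf_eq μ X' hX'm hcX' α hα
  set q : ℝ := lowerQuantile μ X α with hqdef
  set q' : ℝ := lowerQuantile μ X' α with hq'def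
  set s : Set Ω := {ω | q ≤ X ω} with hsdef
  set s' : Set Ω := {ω | q' ≤ X' ω} with hs'def
  have hsm : MeasurableSet s := hXm measurableSet_Ici
  have hs'm : MeasurableSet s' := hX'm measurableSet_Ici
  have hone : ENNReal.ofReal α < 1 := by
    rw [← ENNReal.ofReal_one]
    exact ENNReal.ofReal_lt_ofReal_iff_of_nonneg hα.1.le |>.mpr hα.2
  have hμne : (1 : ENNReal) - ENNReal.ofReal α ≠ 0 :=
    ne_of_gt (tsub_pos_of_lt hone)
  have hμsne : μ s ≠ 0 := htail ▸ hμne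
  have hμs'ne : μ s' ≠ 0 := htail' ▸ hμne
  have hkeq : (μ s).toReal = (μ s').toReal := by rw [htail, htail']
  set k := (μ s).toReal with hk
  have hkpos : 0 < k := ENNReal.toReal_pos hμsne (measure_ne_top μ s)
  -- the two means
  set m := (∫ ω in s, φ (X ω) ∂μ) / k with hm
  set m' := (∫ ω in s', φ (X' ω) ∂μ) / (μ s').toReal with hm'
  have hbX : bregmanSuperquantile μ φ X α = Function.invFun φ m := rfl
  have hbX' : bregmanSuperquantile μ φ X' α = Function.invFun φ m' := rfl
  -- m ≤ m'
  have hstep1 : ∫ ω in s, φ (X ω) ∂μ ≤ ∫ ω in s, φ (X' ω) ∂μ := by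
    refine setIntegral_mono_ae hintX.integrableOn hintX'.integrableOn ?_
    filter_upwards [hle] with ω hω using hφ.monotone hω
  have hs'eq : {ω | φ q' ≤ φ (X' ω)} = s' := by
    ext ω; exact hφ.le_iff_le
  have hstep2 : ∫ ω in s, φ (X' ω) ∂μ ≤ ∫ ω in s', φ (X' ω) ∂μ := by
    have := setIntegral_le_tail μ (fun ω => φ (X' ω)) (hφc.measurable.comp hX'm)
      hintX' (φ q') s hsm (by rw [hs'eq, htail, htail'])
    rwa [hs'eq] at this
  have hmm' : m ≤ m' := by
    rw [hm, hm', ← hkeq]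
    exact div_le_div_of_nonneg_right (le_trans hstep1 hstep2) hkpos.le |>.trans_eq rfl
  -- both means in range φ
  have hmr : m ∈ Set.range φ := mean_mem_range μ φ hφc X s hsm hμsne hintX.integrableOn
  have hm'r : m' ∈ Set.range φ := mean_mem_range μ φ hφc X' s' hs'm hμs'ne hintX'.integrableOn
  obtain ⟨a, ha⟩ := hmr
  obtain ⟨b, hb⟩ := hm'r
  rw [hbX, hbX', ← ha, ← hb,
    Function.leftInverse_invFun hφ.injective a,
    Function.leftInverse_invFun hφ.injective b]
  exact hφ.le_iff_le.mp (by rw [ha, hb]; exact hmm')
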